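/- (Favard-like theorem for biorthogonal polynomials.) Let $\{\pi_n(x)\}$ and $\{\sigma_n(y)\}$ be sequences of polynomials defined by the recurrence relations $x\pi_n(x)=\gamma_n\pi_{n+1}(x)+\sum_{j=0}^n a_j(n)\pi_{n-j}(x)$ and $y\sigma_n(y)=\tilde\gamma_n\sigma_{n+1}(y)+\sum_{j=0}^n b_j(n)\sigma_{n-j}(y)$, with $\pi_0,\sigma_0$ nonzero constants and $\gamma_n\neq 0\neq\tilde\gamma_n$ for all $n\in\mathbb{N}$. Then there exists a unique bilinear moment functional $\mathcal{L}:\mathbb{C}[x]\otimes\mathbb{C}[y]\to\mathbb{C}$ such that $\mathcal{L}(\pi_n|\sigma_m)=\delta_{nm}$ for all $n,m$. -/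

import Mathlib

open Polynomial
lemma favard_deg (P : ℕ → Polynomial ℂ) (γ : ℕ → ℂ) (a : ℕ → ℕ → ℂ) (c : ℂ)
    (hc : c ≠ 0) (hP0 : P 0 = C c) (hγ : ∀ n, γ n ≠ 0)
    (hrec : ∀ n, X * P n =
      C (γ n) * P (n + 1) + ∑ j ∈ Finset.range (n + 1), C (a n j) * P (n - j)) :
    ∀ n, (P n).degree = n := by
  intro n
  induction n using Nat.strong_induction_on with
  | _ n ih =>
    match n with
    | 0 => simp [hP0, degree_C hc]
    | m + 1 =>
      have hXP : (X * P m).degree = ((m + 1 : ℕ) : WithBot ℕ) := by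
        rw [degree_mul, degree_X, ih m (Nat.lt_succ_self m)]
        push_cast; ring
      have hsum : (∑ j ∈ Finset.range (m + 1), C (a m j) * P (m - j)).degree
          < ((m + 1 : ℕ) : WithBot ℕ) := by
        refine lt_of_le_of_lt (degree_sum_le _ _) ?_
        rw [Finset.sup_lt_iff (by exact WithBot.bot_lt_coe _)]
        intro j hj
        calc (C (a m j) * P (m - j)).degree ≤ 0 + (P (m - j)).degree :=
              le_trans (degree_mul_le _ _) (add_le_add degree_C_le le_rfl)
          _ = ((m - j : ℕ) : WithBot ℕ) := by
              rw [zero_add, ih (m - j) (Nat.lt_succ_of_le (Nat.sub_le m j))]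
          _ < ((m + 1 : ℕ) : WithBot ℕ) :=
              Nat.cast_lt.mpr (Nat.lt_succ_of_le (Nat.sub_le m j))
      have key : C (γ m) * P (m + 1) =
          X * P m - ∑ j ∈ Finset.range (m + 1), C (a m j) * P (m - j) :=
        eq_sub_of_add_eq (hrec m).symm
      have : (C (γ m) * P (m + 1)).degree = ((m + 1 : ℕ) : WithBot ℕ) := by
        rw [key, degree_sub_eq_left_of_degree_lt (hXP ▸ hsum), hXP]
      rwa [degree_C_mul (hγ m)] at this
lemma favard_basis (P : ℕ → Polynomial ℂ) (hdeg : ∀ n, (P n).degree = n) :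
    ∃ B : Module.Basis ℕ ℂ (Polynomial ℂ), ∀ n, B n = P n := by
  have hcoeff : ∀ n, (P n).coeff n ≠ 0 := by
    intro n
    have hne : P n ≠ 0 := by
      intro h
      have := hdeg n
      rw [h, degree_zero] at this
      exact absurd this (by simp)
    have hnd : (P n).natDegree = n := natDegree_eq_of_degree_eq_some (hdeg n)
    have hl : (P n).coeff n = (P n).leadingCoeff := by rw [leadingCoeff, hnd]
    rw [hl]; exact leadingCoeff_ne_zero.mpr hne
  -- spanning
  have hspan : ∀ n : ℕ, ∀ q : Polynomial ℂ, q.degree < n →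
      q ∈ Submodule.span ℂ (Set.range P) := by
    intro n
    induction n with
    | zero =>
      intro q hq
      rw [Nat.cast_zero, Nat.WithBot.lt_zero_iff, degree_eq_bot] at hq
      simp [hq]
    | succ m ih =>
      intro q hq
      set u : ℂ := q.coeff m / (P m).coeff m with hu
      have h1 : (q - C u * P m).degree < (m : WithBot ℕ) := by
        rw [degree_lt_iff_coeff_zero]
        intro k hk
        rcases eq_or_lt_of_le hk with rfl | hk'
        · simp [coeff_sub, coeff_C_mul, hu, div_mul_cancel₀ _ (hcoeff m)]
        · have hk2 : (m : WithBot ℕ) + 1 ≤ k := by exact_mod_cast hk'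
          have hq0 : q.coeff k = 0 := coeff_eq_zero_of_degree_lt
            (lt_of_lt_of_le hq (by exact_mod_cast hk2))
          have hP0 : (P m).coeff k = 0 := coeff_eq_zero_of_degree_lt
            (lt_of_le_of_lt (le_of_eq (hdeg m)) (by exact_mod_cast hk'))
          simp [coeff_sub, coeff_C_mul, hq0, hP0]
      have h2 := ih _ h1
      have h3 : C u * P m ∈ Submodule.span ℂ (Set.range P) := by
        rw [← smul_eq_C_mul]
        exact Submodule.smul_mem _ _ (Submodule.subset_span ⟨m, rfl⟩)
      have := Submodule.add_mem _ h2 h3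
      simpa using this
  have htop : Submodule.span ℂ (Set.range P) = ⊤ := by
    rw [eq_top_iff]
    intro q _
    exact hspan (q.natDegree + 1) q
      (lt_of_le_of_lt degree_le_natDegree (by exact_mod_cast Nat.lt_succ_self _))
  -- linear independence
  have hli0 : ∀ n : ℕ, ∀ g : ℕ → ℂ,
      (∑ i ∈ Finset.range n, g i • P i) = 0 → ∀ i < n, g i = 0 := by
    intro n
    induction n with
    | zero => intro g _ i hi; omega
    | succ m ih =>
      intro g hg i hi
      have hgm : g m = 0 := by
        have := congrArg (fun p => Polynomial.coeff p m) hg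
        simp only [finset_sum_coeff, coeff_smul, coeff_zero] at this
        rw [Finset.sum_range_succ] at this
        have hz : ∀ i ∈ Finset.range m, g i • (P i).coeff m = 0 := by
          intro i him
          rw [coeff_eq_zero_of_degree_lt
            (lt_of_le_of_lt (le_of_eq (hdeg i)) (by exact_mod_cast Finset.mem_range.mp him)),
            smul_zero]
        rw [Finset.sum_eq_zero hz, zero_add, smul_eq_mul] at this
        exact (mul_eq_zero.mp this).resolve_right (hcoeff m)
      rcases Nat.lt_succ_iff_lt_or_eq.mp hi with hi' | rfl
      · refine ih g ?_ i hi'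
        rw [Finset.sum_range_succ, hgm, zero_smul, add_zero] at hg
        exact hg
      · exact hgm
  have hli : LinearIndependent ℂ P := by
    rw [linearIndependent_iff']
    intro s g hg i his
    set n := (s.sup id) + 1 with hn
    have hsub : s ⊆ Finset.range n := fun j hj =>
      Finset.mem_range.mpr (Nat.lt_succ_of_le (Finset.le_sup (f := id) hj))
    set g' : ℕ → ℂ := fun j => if j ∈ s then g j else 0 with hg'
    have hsum : (∑ j ∈ Finset.range n, g' j • P j) = 0 := by
      rw [← Finset.sum_subset hsub (fun j _ hjs => by simp [hg', hjs])]
      rw [← hg]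
      exact Finset.sum_congr rfl fun j hj => by simp [hg', hj]
    have := hli0 n g' hsum i (Finset.mem_range.mp (hsub his))
    simpa [hg', his] using this
  exact ⟨Module.Basis.mk hli (by rw [htop]), fun n => Module.Basis.mk_apply _ _ _⟩


/-- Favard-like theorem for biorthogonal polynomials: two sequences of
polynomials defined by the recurrences `x P_n = γ_n P_{n+1} + ∑_{j=0}^n a_j(n) P_{n-j}`,
`y S_n = γ'_n S_{n+1} + ∑_{j=0}^n b_j(n) S_{n-j}`, with nonzero constant initial terms
and `γ_n ≠ 0 ≠ γ'_n`, are biorthogonal for a unique bilinear moment functional. -/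
theorem stmt_3 (P S : ℕ → Polynomial ℂ) (γ γ' : ℕ → ℂ) (a b : ℕ → ℕ → ℂ) (c c' : ℂ)
    (hc : c ≠ 0) (hc' : c' ≠ 0) (hP0 : P 0 = C c) (hS0 : S 0 = C c')
    (hγ : ∀ n, γ n ≠ 0) (hγ' : ∀ n, γ' n ≠ 0)
    (hrecP : ∀ n, X * P n =
      C (γ n) * P (n + 1) + ∑ j ∈ Finset.range (n + 1), C (a n j) * P (n - j))
    (hrecS : ∀ n, X * S n =
      C (γ' n) * S (n + 1) + ∑ j ∈ Finset.range (n + 1), C (b n j) * S (n - j)) :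
    ∃! L : Polynomial ℂ →ₗ[ℂ] Polynomial ℂ →ₗ[ℂ] ℂ,
      ∀ n m, L (P n) (S m) = if n = m then 1 else 0 := by
  obtain ⟨BP, hBP⟩ := favard_basis P (favard_deg P γ a c hc hP0 hγ hrecP)
  obtain ⟨BS, hBS⟩ := favard_basis S (favard_deg S γ' b c' hc' hS0 hγ' hrecS)
  refine ⟨BP.constr ℂ (fun n => BS.coord n), ?_, ?_⟩
  · intro n m
    rw [← hBP n, Module.Basis.constr_basis, ← hBS m]
    simp [Module.Basis.coord_apply, Module.Basis.repr_self, Finsupp.single_apply, eq_comm]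
  · intro L' hL'
    apply BP.ext; intro n
    apply BS.ext; intro m
    rw [Module.Basis.constr_basis]
    rw [hBP n, hBS m, hL' n m]
    rw [← hBS m]
    simp [Module.Basis.coord_apply, Module.Basis.repr_self, Finsupp.single_apply, eq_comm]
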